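/- Let Φ_a : ℝ^{2×K×J} → ℝ^{2×K×J} be the fixed-point map of Scheme 1 with data a, r_a = ‖a‖, and set ρ = √(2+√5). If the quantity C_x² + C_y² (where C_x = Δt/(4Δx√(ΔxΔy)), C_y = Δt/(4Δy√(ΔxΔy))) satisfies C_x² + C_y² ≤ (√5 − 2)/(200 r_a²), then Φ_a maps the closed ball Ω_a = {v : ‖v‖ ≤ ρ r_a} into itself and is a contraction on Ω_a, hence Scheme 1 has a unique solution in Ω_a. -/

import Mathlib

open Finset

set_option maxHeartbeats 1000000

noncomputable section

/-- Periodic centered first difference in the k (x) direction. -/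
def Dx (K J : ℕ) (Δx : ℝ) (f : ZMod K × ZMod J → ℝ) : ZMod K × ZMod J → ℝ :=
  fun p => (f (p.1 + 1, p.2) - f (p.1 - 1, p.2)) / (2 * Δx)

/-- Periodic centered first difference in the j (y) direction. -/
def Dy (K J : ℕ) (Δy : ℝ) (f : ZMod K × ZMod J → ℝ) : ZMod K × ZMod J → ℝ :=
  fun p => (f (p.1, p.2 + 1) - f (p.1, p.2 - 1)) / (2 * Δy)

/-- Periodic discrete Laplacian. -/
def discLap (K J : ℕ) (Δx Δy : ℝ) (f : ZMod K × ZMod J → ℝ) :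
    ZMod K × ZMod J → ℝ :=
  fun p =>
    (f (p.1 + 1, p.2) - 2 * f p + f (p.1 - 1, p.2)) / Δx ^ 2 +
    (f (p.1, p.2 + 1) - 2 * f p + f (p.1, p.2 - 1)) / Δy ^ 2

/-- The discrete Helmholtz operator Q = I − α²D². -/
def Qop (K J : ℕ) (α Δx Δy : ℝ) (f : ZMod K × ZMod J → ℝ) :
    ZMod K × ZMod J → ℝ :=
  fun p => f p - α ^ 2 * discLap K J Δx Δy f p

/-- Inverse of the discrete Helmholtz operator. -/
def Qinv (K J : ℕ) (α Δx Δy : ℝ) (f : ZMod K × ZMod J → ℝ) :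
    ZMod K × ZMod J → ℝ :=
  Function.invFun (Qop K J α Δx Δy) f

/-- Norm of a grid vector field (an element of ℝ^{2×K×J}). -/
def pairNorm (K J : ℕ) [NeZero K] [NeZero J] (Δx Δy : ℝ)
    (v : (ZMod K × ZMod J → ℝ) × (ZMod K × ZMod J → ℝ)) : ℝ :=
  Real.sqrt (∑ p : ZMod K × ZMod J, ((v.1 p) ^ 2 + (v.2 p) ^ 2) * Δx * Δy)

/-- The fixed-point map Φ_a of Scheme 1 with data a = M^{(n)}: a fixed point of
    `Phi K J α Δx Δy Δt a` is the new momentum M^{(n+1)}. -/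
def Phi (K J : ℕ) (α Δx Δy Δt : ℝ)
    (a v : (ZMod K × ZMod J → ℝ) × (ZMod K × ZMod J → ℝ)) :
    (ZMod K × ZMod J → ℝ) × (ZMod K × ZMod J → ℝ) :=
  let Qi := Qinv K J α Δx Δy
  (fun p => a.1 p - Δt / 4 *
      (((a.1 p + v.1 p) * Dx K J Δx (fun q => Qi a.1 q + Qi v.1 q) p) +
       ((a.2 p + v.2 p) * Dx K J Δx (fun q => Qi a.2 q + Qi v.2 q) p) +
       Dx K J Δx (fun q => (a.1 q + v.1 q) * (Qi a.1 q + Qi v.1 q)) p +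
       Dy K J Δy (fun q => (a.1 q + v.1 q) * (Qi a.2 q + Qi v.2 q)) p),
   fun p => a.2 p - Δt / 4 *
      (((a.1 p + v.1 p) * Dy K J Δy (fun q => Qi a.1 q + Qi v.1 q) p) +
       ((a.2 p + v.2 p) * Dy K J Δy (fun q => Qi a.2 q + Qi v.2 q) p) +
       Dx K J Δx (fun q => (a.2 q + v.2 q) * (Qi a.1 q + Qi v.1 q)) p +
       Dy K J Δy (fun q => (a.2 q + v.2 q) * (Qi a.2 q + Qi v.2 q)) p))

section
variable {K J : ℕ} [NeZero K] [NeZero J]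

def ssq (f : ZMod K × ZMod J → ℝ) : ℝ := ∑ p, f p ^ 2
def nrm (f : ZMod K × ZMod J → ℝ) : ℝ := Real.sqrt (ssq f)

lemma ssq_nonneg (f : ZMod K × ZMod J → ℝ) : 0 ≤ ssq f :=
  Finset.sum_nonneg fun _ _ => sq_nonneg _
lemma nrm_nonneg (f : ZMod K × ZMod J → ℝ) : 0 ≤ nrm f := Real.sqrt_nonneg _
lemma sq_nrm (f : ZMod K × ZMod J → ℝ) : nrm f ^ 2 = ssq f :=
  Real.sq_sqrt (ssq_nonneg f)

lemma sum_mul_le (f g : ZMod K × ZMod J → ℝ) : ∑ p, f p * g p ≤ nrm f * nrm g := by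
  have h := Finset.sum_mul_sq_le_sq_mul_sq Finset.univ f g
  have h2 : (∑ p, f p * g p) ≤ Real.sqrt ((∑ p, f p ^ 2) * ∑ p, g p ^ 2) := by
    calc (∑ p, f p * g p) ≤ |∑ p, f p * g p| := le_abs_self _
    _ = Real.sqrt ((∑ p, f p * g p) ^ 2) := (Real.sqrt_sq_eq_abs _).symm
    _ ≤ _ := Real.sqrt_le_sqrt h
  rw [Real.sqrt_mul (Finset.sum_nonneg fun _ _ => sq_nonneg _)] at h2
  exact h2

lemma nrm_add_le (f g : ZMod K × ZMod J → ℝ) : nrm (f + g) ≤ nrm f + nrm g := by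
  have key : ssq (f + g) ≤ (nrm f + nrm g) ^ 2 := by
    have e : ssq (f + g) = ssq f + 2 * (∑ p, f p * g p) + ssq g := by
      simp only [ssq, Pi.add_apply]
      rw [Finset.mul_sum, ← Finset.sum_add_distrib, ← Finset.sum_add_distrib]
      exact Finset.sum_congr rfl fun p _ => by ring
    have h := sum_mul_le f g
    have := sq_nrm f; have := sq_nrm g
    nlinarith [nrm_nonneg f, nrm_nonneg g]
  calc nrm (f + g) ≤ Real.sqrt ((nrm f + nrm g) ^ 2) := Real.sqrt_le_sqrt key
  _ = nrm f + nrm g := Real.sqrt_sq (add_nonneg (nrm_nonneg f) (nrm_nonneg g))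

lemma nrm_neg (f : ZMod K × ZMod J → ℝ) : nrm (-f) = nrm f := by
  unfold nrm ssq; simp

lemma nrm_zero : nrm (0 : ZMod K × ZMod J → ℝ) = 0 := by unfold nrm ssq; simp

lemma nrm_sub_le' (f g : ZMod K × ZMod J → ℝ) :
    nrm (fun p => f p - g p) ≤ nrm f + nrm g := by
  have e : (fun p => f p - g p) = f + (-g) := by funext p; simp [sub_eq_add_neg]
  rw [e]
  simpa [nrm_neg] using nrm_add_le f (-g)

lemma nrm_smul (c : ℝ) (f : ZMod K × ZMod J → ℝ) :
    nrm (fun p => c * f p) = |c| * nrm f := by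
  unfold nrm ssq
  rw [← Real.sqrt_sq_eq_abs, ← Real.sqrt_mul (sq_nonneg c), Finset.mul_sum]
  congr 1; exact Finset.sum_congr rfl fun p _ => by ring

lemma nrm_eq_zero {f : ZMod K × ZMod J → ℝ} (h : nrm f = 0) : f = 0 := by
  have h2 : ssq f = 0 := by
    have := sq_nrm f; rw [h] at this; simpa using this.symm
  funext p
  have := (Finset.sum_eq_zero_iff_of_nonneg
    (fun p _ => sq_nonneg (f p))).1 h2 p (Finset.mem_univ p)
  exact pow_eq_zero_iff (two_ne_zero) |>.1 this

lemma ssq_shift_xp (f : ZMod K × ZMod J → ℝ) :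
    ssq (fun p => f (p.1 + 1, p.2)) = ssq f :=
  Fintype.sum_equiv ((Equiv.addRight (1 : ZMod K)).prodCongr (Equiv.refl (ZMod J)))
    _ _ fun _ => rfl
lemma ssq_shift_xm (f : ZMod K × ZMod J → ℝ) :
    ssq (fun p => f (p.1 - 1, p.2)) = ssq f :=
  Fintype.sum_equiv ((Equiv.subRight (1 : ZMod K)).prodCongr (Equiv.refl (ZMod J)))
    _ _ fun _ => rfl
lemma ssq_shift_yp (f : ZMod K × ZMod J → ℝ) :
    ssq (fun p => f (p.1, p.2 + 1)) = ssq f :=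
  Fintype.sum_equiv ((Equiv.refl (ZMod K)).prodCongr (Equiv.addRight (1 : ZMod J)))
    _ _ fun _ => rfl
lemma ssq_shift_ym (f : ZMod K × ZMod J → ℝ) :
    ssq (fun p => f (p.1, p.2 - 1)) = ssq f :=
  Fintype.sum_equiv ((Equiv.refl (ZMod K)).prodCongr (Equiv.subRight (1 : ZMod J)))
    _ _ fun _ => rfl

lemma nrm_Dx {Δx : ℝ} (hx : 0 < Δx) (f : ZMod K × ZMod J → ℝ) :
    nrm (Dx K J Δx f) ≤ nrm f / Δx := by
  have e : Dx K J Δx f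
      = fun p => (1/(2*Δx)) * (f (p.1 + 1, p.2) - f (p.1 - 1, p.2)) := by
    funext p; simp only [Dx]; field_simp
  rw [e, nrm_smul, abs_of_pos (by positivity)]
  have tri : nrm (fun p : ZMod K × ZMod J => f (p.1 + 1, p.2) - f (p.1 - 1, p.2))
      ≤ nrm f + nrm f := by
    have h := nrm_sub_le' (fun p : ZMod K × ZMod J => f (p.1 + 1, p.2))
      (fun p : ZMod K × ZMod J => f (p.1 - 1, p.2))
    unfold nrm at h ⊢
    rw [ssq_shift_xp, ssq_shift_xm] at h
    exact h
  calc (1/(2*Δx)) * nrm (fun p : ZMod K × ZMod J => f (p.1 + 1, p.2) - f (p.1 - 1, p.2))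
      ≤ (1/(2*Δx)) * (nrm f + nrm f) :=
        mul_le_mul_of_nonneg_left tri (by positivity)
  _ = nrm f / Δx := by field_simp; ring

lemma nrm_Dy {Δy : ℝ} (hy : 0 < Δy) (f : ZMod K × ZMod J → ℝ) :
    nrm (Dy K J Δy f) ≤ nrm f / Δy := by
  have e : Dy K J Δy f
      = fun p => (1/(2*Δy)) * (f (p.1, p.2 + 1) - f (p.1, p.2 - 1)) := by
    funext p; simp only [Dy]; field_simp
  rw [e, nrm_smul, abs_of_pos (by positivity)]
  have tri : nrm (fun p : ZMod K × ZMod J => f (p.1, p.2 + 1) - f (p.1, p.2 - 1))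
      ≤ nrm f + nrm f := by
    have h := nrm_sub_le' (fun p : ZMod K × ZMod J => f (p.1, p.2 + 1))
      (fun p : ZMod K × ZMod J => f (p.1, p.2 - 1))
    unfold nrm at h ⊢
    rw [ssq_shift_yp, ssq_shift_ym] at h
    exact h
  calc (1/(2*Δy)) * nrm (fun p : ZMod K × ZMod J => f (p.1, p.2 + 1) - f (p.1, p.2 - 1))
      ≤ (1/(2*Δy)) * (nrm f + nrm f) :=
        mul_le_mul_of_nonneg_left tri (by positivity)
  _ = nrm f / Δy := by field_simp; ring

lemma nrm_mul (f g : ZMod K × ZMod J → ℝ) :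
    nrm (fun p => f p * g p) ≤ nrm f * nrm g := by
  have hs : ssq (fun p => f p * g p) ≤ ssq f * ssq g := by
    unfold ssq
    calc ∑ p : ZMod K × ZMod J, (f p * g p) ^ 2
        = ∑ p : ZMod K × ZMod J, f p ^ 2 * g p ^ 2 :=
          Finset.sum_congr rfl fun p _ => by ring
    _ ≤ ∑ p : ZMod K × ZMod J, (∑ q : ZMod K × ZMod J, f q ^ 2) * g p ^ 2 :=
          Finset.sum_le_sum fun p _ => mul_le_mul_of_nonneg_right
            (Finset.single_le_sum (fun q _ => sq_nonneg (f q)) (Finset.mem_univ p))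
            (sq_nonneg _)
    _ = (∑ q : ZMod K × ZMod J, f q ^ 2) * ∑ p : ZMod K × ZMod J, g p ^ 2 :=
          (Finset.mul_sum _ _ _).symm
  calc nrm (fun p => f p * g p) ≤ Real.sqrt (ssq f * ssq g) := Real.sqrt_le_sqrt hs
  _ = nrm f * nrm g := Real.sqrt_mul (ssq_nonneg f) _

/-! ### Qop -/

def QopL (K J : ℕ) [NeZero K] [NeZero J] (α Δx Δy : ℝ) :
    (ZMod K × ZMod J → ℝ) →ₗ[ℝ] (ZMod K × ZMod J → ℝ) where
  toFun := Qop K J α Δx Δy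
  map_add' f g := by
    funext p; simp only [Qop, discLap, Pi.add_apply]; ring
  map_smul' c f := by
    funext p
    simp only [Qop, discLap, Pi.smul_apply, smul_eq_mul, RingHom.id_apply]
    try ring

lemma sum_secdiff_x (f : ZMod K × ZMod J → ℝ) :
    ∑ p : ZMod K × ZMod J, (f (p.1 + 1, p.2) - 2 * f p + f (p.1 - 1, p.2)) * f p ≤ 0 := by
  have h1 : ∑ p : ZMod K × ZMod J, f (p.1 + 1, p.2) * f p ≤ ssq f := by
    calc ∑ p : ZMod K × ZMod J, f (p.1 + 1, p.2) * f p
        ≤ ∑ p : ZMod K × ZMod J, (f (p.1 + 1, p.2) ^ 2 + f p ^ 2) / 2 :=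
          Finset.sum_le_sum fun p _ => by nlinarith [sq_nonneg (f (p.1 + 1, p.2) - f p)]
    _ = ((∑ p : ZMod K × ZMod J, f (p.1 + 1, p.2) ^ 2) + ∑ p : ZMod K × ZMod J, f p ^ 2) / 2 := by
          rw [← Finset.sum_div, Finset.sum_add_distrib]
    _ = ssq f := by have hsh := ssq_shift_xp f; simp only [ssq] at hsh ⊢; rw [hsh]; ring
  have h2 : ∑ p : ZMod K × ZMod J, f (p.1 - 1, p.2) * f p ≤ ssq f := by
    calc ∑ p : ZMod K × ZMod J, f (p.1 - 1, p.2) * f p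
        ≤ ∑ p : ZMod K × ZMod J, (f (p.1 - 1, p.2) ^ 2 + f p ^ 2) / 2 :=
          Finset.sum_le_sum fun p _ => by nlinarith [sq_nonneg (f (p.1 - 1, p.2) - f p)]
    _ = ((∑ p : ZMod K × ZMod J, f (p.1 - 1, p.2) ^ 2) + ∑ p : ZMod K × ZMod J, f p ^ 2) / 2 := by
          rw [← Finset.sum_div, Finset.sum_add_distrib]
    _ = ssq f := by have hsh := ssq_shift_xm f; simp only [ssq] at hsh ⊢; rw [hsh]; ring
  have e : ∑ p : ZMod K × ZMod J, (f (p.1 + 1, p.2) - 2 * f p + f (p.1 - 1, p.2)) * f p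
      = (∑ p : ZMod K × ZMod J, f (p.1 + 1, p.2) * f p)
        + (∑ p : ZMod K × ZMod J, f (p.1 - 1, p.2) * f p)
        - 2 * ∑ p : ZMod K × ZMod J, f p ^ 2 := by
    rw [Finset.mul_sum, ← Finset.sum_add_distrib, ← Finset.sum_sub_distrib]
    exact Finset.sum_congr rfl fun p _ => by ring
  unfold ssq at h1 h2
  linarith
lemma sum_secdiff_y (f : ZMod K × ZMod J → ℝ) :
    ∑ p : ZMod K × ZMod J, (f (p.1, p.2 + 1) - 2 * f p + f (p.1, p.2 - 1)) * f p ≤ 0 := by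
  have h1 : ∑ p : ZMod K × ZMod J, f (p.1, p.2 + 1) * f p ≤ ssq f := by
    calc ∑ p : ZMod K × ZMod J, f (p.1, p.2 + 1) * f p
        ≤ ∑ p : ZMod K × ZMod J, (f (p.1, p.2 + 1) ^ 2 + f p ^ 2) / 2 :=
          Finset.sum_le_sum fun p _ => by nlinarith [sq_nonneg (f (p.1, p.2 + 1) - f p)]
    _ = ((∑ p : ZMod K × ZMod J, f (p.1, p.2 + 1) ^ 2) + ∑ p : ZMod K × ZMod J, f p ^ 2) / 2 := by
          rw [← Finset.sum_div, Finset.sum_add_distrib]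
    _ = ssq f := by have hsh := ssq_shift_yp f; simp only [ssq] at hsh ⊢; rw [hsh]; ring
  have h2 : ∑ p : ZMod K × ZMod J, f (p.1, p.2 - 1) * f p ≤ ssq f := by
    calc ∑ p : ZMod K × ZMod J, f (p.1, p.2 - 1) * f p
        ≤ ∑ p : ZMod K × ZMod J, (f (p.1, p.2 - 1) ^ 2 + f p ^ 2) / 2 :=
          Finset.sum_le_sum fun p _ => by nlinarith [sq_nonneg (f (p.1, p.2 - 1) - f p)]
    _ = ((∑ p : ZMod K × ZMod J, f (p.1, p.2 - 1) ^ 2) + ∑ p : ZMod K × ZMod J, f p ^ 2) / 2 := by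
          rw [← Finset.sum_div, Finset.sum_add_distrib]
    _ = ssq f := by have hsh := ssq_shift_ym f; simp only [ssq] at hsh ⊢; rw [hsh]; ring
  have e : ∑ p : ZMod K × ZMod J, (f (p.1, p.2 + 1) - 2 * f p + f (p.1, p.2 - 1)) * f p
      = (∑ p : ZMod K × ZMod J, f (p.1, p.2 + 1) * f p)
        + (∑ p : ZMod K × ZMod J, f (p.1, p.2 - 1) * f p)
        - 2 * ∑ p : ZMod K × ZMod J, f p ^ 2 := by
    rw [Finset.mul_sum, ← Finset.sum_add_distrib, ← Finset.sum_sub_distrib]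
    exact Finset.sum_congr rfl fun p _ => by ring
  unfold ssq at h1 h2
  linarith

lemma qop_coercive (α Δx Δy : ℝ) (f : ZMod K × ZMod J → ℝ) :
    ssq f ≤ ∑ p : ZMod K × ZMod J, Qop K J α Δx Δy f p * f p := by
  have e : ∑ p : ZMod K × ZMod J, Qop K J α Δx Δy f p * f p
      = ssq f - α ^ 2 *
        ((∑ p : ZMod K × ZMod J, (f (p.1 + 1, p.2) - 2 * f p + f (p.1 - 1, p.2)) * f p) / Δx ^ 2
        + (∑ p : ZMod K × ZMod J, (f (p.1, p.2 + 1) - 2 * f p + f (p.1, p.2 - 1)) * f p) / Δy ^ 2) := by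
    unfold Qop discLap ssq
    rw [Finset.sum_div, Finset.sum_div, ← Finset.sum_add_distrib, Finset.mul_sum,
      ← Finset.sum_sub_distrib]
    exact Finset.sum_congr rfl fun p _ => by ring
  have hx := sum_secdiff_x f
  have hy := sum_secdiff_y f
  have h1 : (∑ p : ZMod K × ZMod J, (f (p.1 + 1, p.2) - 2 * f p + f (p.1 - 1, p.2)) * f p) / Δx ^ 2 ≤ 0 :=
    div_nonpos_of_nonpos_of_nonneg hx (sq_nonneg _)
  have h2 : (∑ p : ZMod K × ZMod J, (f (p.1, p.2 + 1) - 2 * f p + f (p.1, p.2 - 1)) * f p) / Δy ^ 2 ≤ 0 :=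
    div_nonpos_of_nonpos_of_nonneg hy (sq_nonneg _)
  nlinarith [sq_nonneg α]

lemma nrm_le_nrm_qop (α Δx Δy : ℝ) (f : ZMod K × ZMod J → ℝ) :
    nrm f ≤ nrm (Qop K J α Δx Δy f) := by
  rcases eq_or_lt_of_le (nrm_nonneg f) with h0 | h0
  · rw [← h0]; exact nrm_nonneg _
  · have h1 := qop_coercive (K := K) (J := J) α Δx Δy f
    have h2 := sum_mul_le (Qop K J α Δx Δy f) f
    have h3 : nrm f * nrm f ≤ nrm (Qop K J α Δx Δy f) * nrm f := by
      have := sq_nrm f; nlinarith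
    exact le_of_mul_le_mul_right h3 h0

lemma qop_injective (α Δx Δy : ℝ) :
    Function.Injective (Qop K J α Δx Δy) := by
  intro f g hfg
  have hQ : Qop K J α Δx Δy (f - g) = 0 := by
    have h := (QopL K J α Δx Δy).map_sub f g
    have h2 : Qop K J α Δx Δy (f - g)
        = Qop K J α Δx Δy f - Qop K J α Δx Δy g := h
    rw [h2, hfg, sub_self]
  have h := nrm_le_nrm_qop (K := K) (J := J) α Δx Δy (f - g)
  rw [hQ, nrm_zero] at h
  have : nrm (f - g) = 0 := le_antisymm h (nrm_nonneg _)
  have := nrm_eq_zero this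
  exact sub_eq_zero.1 this

lemma qop_surjective (α Δx Δy : ℝ) :
    Function.Surjective (Qop K J α Δx Δy) :=
  (LinearMap.injective_iff_surjective (f := QopL K J α Δx Δy)).1
    (qop_injective α Δx Δy)

lemma qop_qinv (α Δx Δy : ℝ) (f : ZMod K × ZMod J → ℝ) :
    Qop K J α Δx Δy (Qinv K J α Δx Δy f) = f :=
  Function.rightInverse_invFun (qop_surjective α Δx Δy) f

lemma nrm_qinv (α Δx Δy : ℝ) (f : ZMod K × ZMod J → ℝ) :
    nrm (Qinv K J α Δx Δy f) ≤ nrm f := by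
  have h := nrm_le_nrm_qop (K := K) (J := J) α Δx Δy (Qinv K J α Δx Δy f)
  rwa [qop_qinv] at h

lemma qinv_add (α Δx Δy : ℝ) (f g : ZMod K × ZMod J → ℝ) :
    Qinv K J α Δx Δy (f + g) = Qinv K J α Δx Δy f + Qinv K J α Δx Δy g := by
  apply qop_injective α Δx Δy
  rw [qop_qinv]
  have h : Qop K J α Δx Δy (Qinv K J α Δx Δy f + Qinv K J α Δx Δy g)
      = Qop K J α Δx Δy (Qinv K J α Δx Δy f) + Qop K J α Δx Δy (Qinv K J α Δx Δy g) :=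
    (QopL K J α Δx Δy).map_add _ _
  rw [h, qop_qinv, qop_qinv]

lemma qinv_sub (α Δx Δy : ℝ) (f g : ZMod K × ZMod J → ℝ) :
    Qinv K J α Δx Δy (f - g) = Qinv K J α Δx Δy f - Qinv K J α Δx Δy g := by
  apply qop_injective α Δx Δy
  rw [qop_qinv]
  have h : Qop K J α Δx Δy (Qinv K J α Δx Δy f - Qinv K J α Δx Δy g)
      = Qop K J α Δx Δy (Qinv K J α Δx Δy f) - Qop K J α Δx Δy (Qinv K J α Δx Δy g) :=
    (QopL K J α Δx Δy).map_sub _ _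
  rw [h, qop_qinv, qop_qinv]


/-! ### pair level -/

def pnrm (v : (ZMod K × ZMod J → ℝ) × (ZMod K × ZMod J → ℝ)) : ℝ :=
  Real.sqrt (ssq v.1 + ssq v.2)

lemma pnrm_nonneg (v : (ZMod K × ZMod J → ℝ) × (ZMod K × ZMod J → ℝ)) :
    0 ≤ pnrm v := Real.sqrt_nonneg _

lemma sq_pnrm (v : (ZMod K × ZMod J → ℝ) × (ZMod K × ZMod J → ℝ)) :
    pnrm v ^ 2 = ssq v.1 + ssq v.2 :=
  Real.sq_sqrt (add_nonneg (ssq_nonneg _) (ssq_nonneg _))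

lemma pnrm_eq (v : (ZMod K × ZMod J → ℝ) × (ZMod K × ZMod J → ℝ)) :
    pnrm v = Real.sqrt (nrm v.1 ^ 2 + nrm v.2 ^ 2) := by
  rw [sq_nrm, sq_nrm]; rfl

lemma nrm_fst_le (v : (ZMod K × ZMod J → ℝ) × (ZMod K × ZMod J → ℝ)) :
    nrm v.1 ≤ pnrm v := by
  apply Real.sqrt_le_sqrt; simpa using ssq_nonneg v.2

lemma nrm_snd_le (v : (ZMod K × ZMod J → ℝ) × (ZMod K × ZMod J → ℝ)) :
    nrm v.2 ≤ pnrm v := by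
  apply Real.sqrt_le_sqrt; simpa using ssq_nonneg v.1

lemma cauchy2 (a b c d : ℝ) :
    a * c + b * d ≤ Real.sqrt (a ^ 2 + b ^ 2) * Real.sqrt (c ^ 2 + d ^ 2) := by
  have h : (a * c + b * d) ^ 2 ≤ (a ^ 2 + b ^ 2) * (c ^ 2 + d ^ 2) := by
    nlinarith [sq_nonneg (a * d - b * c)]
  calc a * c + b * d ≤ |a * c + b * d| := le_abs_self _
  _ = Real.sqrt ((a * c + b * d) ^ 2) := (Real.sqrt_sq_eq_abs _).symm
  _ ≤ Real.sqrt ((a ^ 2 + b ^ 2) * (c ^ 2 + d ^ 2)) := Real.sqrt_le_sqrt h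
  _ = _ := Real.sqrt_mul (by positivity) _

lemma minkowski2 {a b c d : ℝ} (ha : 0 ≤ a) (hb : 0 ≤ b) (hc : 0 ≤ c) (hd : 0 ≤ d) :
    Real.sqrt ((a + b) ^ 2 + (c + d) ^ 2)
      ≤ Real.sqrt (a ^ 2 + c ^ 2) + Real.sqrt (b ^ 2 + d ^ 2) := by
  have hA : Real.sqrt (a ^ 2 + c ^ 2) ^ 2 = a ^ 2 + c ^ 2 := Real.sq_sqrt (by positivity)
  have hB : Real.sqrt (b ^ 2 + d ^ 2) ^ 2 = b ^ 2 + d ^ 2 := Real.sq_sqrt (by positivity)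
  have hab : a * b + c * d ≤ Real.sqrt (a ^ 2 + c ^ 2) * Real.sqrt (b ^ 2 + d ^ 2) :=
    cauchy2 a c b d
  have key : (a + b) ^ 2 + (c + d) ^ 2
      ≤ (Real.sqrt (a ^ 2 + c ^ 2) + Real.sqrt (b ^ 2 + d ^ 2)) ^ 2 := by nlinarith
  calc Real.sqrt ((a + b) ^ 2 + (c + d) ^ 2)
      ≤ Real.sqrt ((Real.sqrt (a ^ 2 + c ^ 2) + Real.sqrt (b ^ 2 + d ^ 2)) ^ 2) :=
        Real.sqrt_le_sqrt key
  _ = _ := Real.sqrt_sq (add_nonneg (Real.sqrt_nonneg _) (Real.sqrt_nonneg _))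

lemma pnrm_le_of {v : (ZMod K × ZMod J → ℝ) × (ZMod K × ZMod J → ℝ)} {A B : ℝ}
    (h1 : nrm v.1 ≤ A) (h2 : nrm v.2 ≤ B) :
    pnrm v ≤ Real.sqrt (A ^ 2 + B ^ 2) := by
  rw [pnrm_eq]
  apply Real.sqrt_le_sqrt
  have hA := (nrm_nonneg v.1).trans h1
  have hB := (nrm_nonneg v.2).trans h2
  have := pow_le_pow_left₀ (nrm_nonneg v.1) h1 2
  have := pow_le_pow_left₀ (nrm_nonneg v.2) h2 2
  linarith

lemma pnrm_add_le (u v : (ZMod K × ZMod J → ℝ) × (ZMod K × ZMod J → ℝ)) :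
    pnrm (u + v) ≤ pnrm u + pnrm v := by
  have h1 : nrm (u + v).1 ≤ nrm u.1 + nrm v.1 := nrm_add_le u.1 v.1
  have h2 : nrm (u + v).2 ≤ nrm u.2 + nrm v.2 := nrm_add_le u.2 v.2
  calc pnrm (u + v) ≤ Real.sqrt ((nrm u.1 + nrm v.1) ^ 2 + (nrm u.2 + nrm v.2) ^ 2) :=
        pnrm_le_of h1 h2
  _ ≤ Real.sqrt (nrm u.1 ^ 2 + nrm u.2 ^ 2) + Real.sqrt (nrm v.1 ^ 2 + nrm v.2 ^ 2) :=
        minkowski2 (nrm_nonneg _) (nrm_nonneg _) (nrm_nonneg _) (nrm_nonneg _)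
  _ = pnrm u + pnrm v := by rw [← pnrm_eq, ← pnrm_eq]

lemma ssq_neg (f : ZMod K × ZMod J → ℝ) : ssq (-f) = ssq f := by unfold ssq; simp

lemma pnrm_neg (u : (ZMod K × ZMod J → ℝ) × (ZMod K × ZMod J → ℝ)) :
    pnrm (-u) = pnrm u := by
  unfold pnrm
  have e1 : (-u).1 = -(u.1) := rfl
  have e2 : (-u).2 = -(u.2) := rfl
  rw [e1, e2, ssq_neg, ssq_neg]

lemma pnrm_sub_le (u v : (ZMod K × ZMod J → ℝ) × (ZMod K × ZMod J → ℝ)) :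
    pnrm (u - v) ≤ pnrm u + pnrm v := by
  have : u - v = u + (-v) := by abel
  rw [this]
  calc pnrm (u + (-v)) ≤ pnrm u + pnrm (-v) := pnrm_add_le _ _
  _ = pnrm u + pnrm v := by rw [pnrm_neg]

lemma pnrm_eq_zero {v : (ZMod K × ZMod J → ℝ) × (ZMod K × ZMod J → ℝ)}
    (h : pnrm v = 0) : v = 0 := by
  have h2 : ssq v.1 + ssq v.2 = 0 := by
    have := sq_pnrm v; rw [h] at this; simpa using this.symm
  have h3 : nrm v.1 = 0 := by
    have : ssq v.1 = 0 := le_antisymm (by nlinarith [ssq_nonneg v.2]) (ssq_nonneg v.1)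
    unfold nrm; rw [this]; exact Real.sqrt_zero
  have h4 : nrm v.2 = 0 := by
    have : ssq v.2 = 0 := le_antisymm (by nlinarith [ssq_nonneg v.1]) (ssq_nonneg v.2)
    unfold nrm; rw [this]; exact Real.sqrt_zero
  have := nrm_eq_zero h3
  have := nrm_eq_zero h4
  exact Prod.ext_iff.mpr ⟨by assumption, by assumption⟩

lemma nrm_add_le'' (f g : ZMod K × ZMod J → ℝ) :
    nrm (fun p => f p + g p) ≤ nrm f + nrm g := nrm_add_le f g



def Bm (K J : ℕ) [NeZero K] [NeZero J] (α Δx Δy Δt : ℝ)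
    (u u' : (ZMod K × ZMod J → ℝ) × (ZMod K × ZMod J → ℝ)) :
    (ZMod K × ZMod J → ℝ) × (ZMod K × ZMod J → ℝ) :=
  (fun p => Δt / 4 *
      (u.1 p * Dx K J Δx (Qinv K J α Δx Δy u'.1) p +
       u.2 p * Dx K J Δx (Qinv K J α Δx Δy u'.2) p +
       Dx K J Δx (fun q => u.1 q * Qinv K J α Δx Δy u'.1 q) p +
       Dy K J Δy (fun q => u.1 q * Qinv K J α Δx Δy u'.2 q) p),
   fun p => Δt / 4 *
      (u.1 p * Dy K J Δy (Qinv K J α Δx Δy u'.1) p +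
       u.2 p * Dy K J Δy (Qinv K J α Δx Δy u'.2) p +
       Dx K J Δx (fun q => u.2 q * Qinv K J α Δx Δy u'.1 q) p +
       Dy K J Δy (fun q => u.2 q * Qinv K J α Δx Δy u'.2 q) p))

lemma phi_eq (α Δx Δy Δt : ℝ)
    (a v : (ZMod K × ZMod J → ℝ) × (ZMod K × ZMod J → ℝ)) :
    Phi K J α Δx Δy Δt a v = a - Bm K J α Δx Δy Δt (a + v) (a + v) := by
  apply Prod.ext_iff.mpr
  constructor <;>
  · funext p
    simp only [Phi, Bm, Prod.fst_sub, Prod.snd_sub, Prod.fst_add, Prod.snd_add,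
      Pi.sub_apply, Pi.add_apply, qinv_add, Dx, Dy]
    try ring

lemma phi_sub (α Δx Δy Δt : ℝ)
    (a v w : (ZMod K × ZMod J → ℝ) × (ZMod K × ZMod J → ℝ)) :
    Phi K J α Δx Δy Δt a v - Phi K J α Δx Δy Δt a w =
      -(Bm K J α Δx Δy Δt (v - w) (a + v) + Bm K J α Δx Δy Δt (a + w) (v - w)) := by
  apply Prod.ext_iff.mpr
  constructor <;>
  · funext p
    simp only [Phi, Bm, Prod.fst_sub, Prod.snd_sub, Prod.fst_add, Prod.snd_add,
      Prod.fst_neg, Prod.snd_neg, Pi.sub_apply, Pi.add_apply, Pi.neg_apply,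
      qinv_add, qinv_sub, Dx, Dy]
    try ring


lemma bm_bound (α : ℝ) {Δx Δy Δt : ℝ} (hx : 0 < Δx) (hy : 0 < Δy) (ht : 0 < Δt)
    (u u' : (ZMod K × ZMod J → ℝ) × (ZMod K × ZMod J → ℝ)) :
    pnrm (Bm K J α Δx Δy Δt u u') ≤
      2 * Real.sqrt ((Δt / (4 * Δx)) ^ 2 + (Δt / (4 * Δy)) ^ 2) * pnrm u * pnrm u' := by
  set cx := Δt / (4 * Δx) with hcx
  set cy := Δt / (4 * Δy) with hcy
  have hcx0 : 0 < cx := by rw [hcx]; positivity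
  have hcy0 : 0 < cy := by rw [hcy]; positivity
  set x := nrm u.1
  set y := nrm u.2
  set x' := nrm u'.1
  set y' := nrm u'.2
  set U := pnrm u
  set U' := pnrm u'
  set κ := Real.sqrt (cx ^ 2 + cy ^ 2) with hκ
  have hx0 : 0 ≤ x := nrm_nonneg _
  have hy0 : 0 ≤ y := nrm_nonneg _
  have hx'0 : 0 ≤ x' := nrm_nonneg _
  have hy'0 : 0 ≤ y' := nrm_nonneg _
  have hU0 : 0 ≤ U := pnrm_nonneg _
  have hU'0 : 0 ≤ U' := pnrm_nonneg _
  have hκ0 : 0 ≤ κ := Real.sqrt_nonneg _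
  have hxU : x ≤ U := nrm_fst_le u
  have hyU : y ≤ U := nrm_snd_le u
  have hx'U : x' ≤ U' := nrm_fst_le u'
  have hy'U : y' ≤ U' := nrm_snd_le u'
  have hU2 : x ^ 2 + y ^ 2 = U ^ 2 := by rw [sq_pnrm, sq_nrm, sq_nrm]
  have hU'2 : x' ^ 2 + y' ^ 2 = U' ^ 2 := by rw [sq_pnrm, sq_nrm, sq_nrm]
  have hκ2 : cx ^ 2 + cy ^ 2 = κ ^ 2 := (Real.sq_sqrt (by positivity)).symm
  -- bounds on the elementary pieces
  have hq1 : nrm (Dx K J Δx (Qinv K J α Δx Δy u'.1)) ≤ x' / Δx :=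
    (nrm_Dx hx _).trans (by gcongr; exact nrm_qinv α Δx Δy u'.1)
  have hq2 : nrm (Dx K J Δx (Qinv K J α Δx Δy u'.2)) ≤ y' / Δx :=
    (nrm_Dx hx _).trans (by gcongr; exact nrm_qinv α Δx Δy u'.2)
  have hq3 : nrm (Dy K J Δy (Qinv K J α Δx Δy u'.1)) ≤ x' / Δy :=
    (nrm_Dy hy _).trans (by gcongr; exact nrm_qinv α Δx Δy u'.1)
  have hq4 : nrm (Dy K J Δy (Qinv K J α Δx Δy u'.2)) ≤ y' / Δy :=
    (nrm_Dy hy _).trans (by gcongr; exact nrm_qinv α Δx Δy u'.2)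
  have hm1 : nrm (fun q => u.1 q * Qinv K J α Δx Δy u'.1 q) ≤ x * x' :=
    (nrm_mul _ _).trans (mul_le_mul_of_nonneg_left (nrm_qinv α Δx Δy u'.1) hx0)
  have hm2 : nrm (fun q => u.1 q * Qinv K J α Δx Δy u'.2 q) ≤ x * y' :=
    (nrm_mul _ _).trans (mul_le_mul_of_nonneg_left (nrm_qinv α Δx Δy u'.2) hx0)
  have hm3 : nrm (fun q => u.2 q * Qinv K J α Δx Δy u'.1 q) ≤ y * x' :=
    (nrm_mul _ _).trans (mul_le_mul_of_nonneg_left (nrm_qinv α Δx Δy u'.1) hy0)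
  have hm4 : nrm (fun q => u.2 q * Qinv K J α Δx Δy u'.2 q) ≤ y * y' :=
    (nrm_mul _ _).trans (mul_le_mul_of_nonneg_left (nrm_qinv α Δx Δy u'.2) hy0)
  -- first component
  have hcomp1 : nrm (Bm K J α Δx Δy Δt u u').1 ≤ cx * (2 * x * x' + y * y') + cy * (x * y') := by
    have e : (Bm K J α Δx Δy Δt u u').1 = fun p => (Δt / 4) *
        ((fun p => u.1 p * Dx K J Δx (Qinv K J α Δx Δy u'.1) p +
          u.2 p * Dx K J Δx (Qinv K J α Δx Δy u'.2) p +
          Dx K J Δx (fun q => u.1 q * Qinv K J α Δx Δy u'.1 q) p +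
          Dy K J Δy (fun q => u.1 q * Qinv K J α Δx Δy u'.2 q) p) p) := rfl
    rw [e, nrm_smul, abs_of_pos (by positivity)]
    have t1 : nrm (fun p => u.1 p * Dx K J Δx (Qinv K J α Δx Δy u'.1) p) ≤ x * (x' / Δx) :=
      (nrm_mul _ _).trans (mul_le_mul_of_nonneg_left hq1 hx0)
    have t2 : nrm (fun p => u.2 p * Dx K J Δx (Qinv K J α Δx Δy u'.2) p) ≤ y * (y' / Δx) :=
      (nrm_mul _ _).trans (mul_le_mul_of_nonneg_left hq2 hy0)
    have t3 : nrm (Dx K J Δx (fun q => u.1 q * Qinv K J α Δx Δy u'.1 q)) ≤ (x * x') / Δx :=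
      (nrm_Dx hx _).trans (by gcongr)
    have t4 : nrm (Dy K J Δy (fun q => u.1 q * Qinv K J α Δx Δy u'.2 q)) ≤ (x * y') / Δy :=
      (nrm_Dy hy _).trans (by gcongr)
    have tri : nrm (fun p => u.1 p * Dx K J Δx (Qinv K J α Δx Δy u'.1) p +
          u.2 p * Dx K J Δx (Qinv K J α Δx Δy u'.2) p +
          Dx K J Δx (fun q => u.1 q * Qinv K J α Δx Δy u'.1 q) p +
          Dy K J Δy (fun q => u.1 q * Qinv K J α Δx Δy u'.2 q) p)
        ≤ x * (x' / Δx) + y * (y' / Δx) + (x * x') / Δx + (x * y') / Δy := by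
      calc nrm _ ≤ nrm (fun p => u.1 p * Dx K J Δx (Qinv K J α Δx Δy u'.1) p +
            u.2 p * Dx K J Δx (Qinv K J α Δx Δy u'.2) p +
            Dx K J Δx (fun q => u.1 q * Qinv K J α Δx Δy u'.1 q) p)
          + nrm (Dy K J Δy (fun q => u.1 q * Qinv K J α Δx Δy u'.2 q)) :=
            nrm_add_le'' _ _
      _ ≤ (nrm (fun p => u.1 p * Dx K J Δx (Qinv K J α Δx Δy u'.1) p +
            u.2 p * Dx K J Δx (Qinv K J α Δx Δy u'.2) p)
          + nrm (Dx K J Δx (fun q => u.1 q * Qinv K J α Δx Δy u'.1 q)))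
          + nrm (Dy K J Δy (fun q => u.1 q * Qinv K J α Δx Δy u'.2 q)) := by
            gcongr ?_ + _
            exact nrm_add_le'' _ _
      _ ≤ ((nrm (fun p => u.1 p * Dx K J Δx (Qinv K J α Δx Δy u'.1) p)
          + nrm (fun p => u.2 p * Dx K J Δx (Qinv K J α Δx Δy u'.2) p))
          + nrm (Dx K J Δx (fun q => u.1 q * Qinv K J α Δx Δy u'.1 q)))
          + nrm (Dy K J Δy (fun q => u.1 q * Qinv K J α Δx Δy u'.2 q)) := by
            gcongr (?_ + _) + _
            exact nrm_add_le'' _ _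
      _ ≤ x * (x' / Δx) + y * (y' / Δx) + (x * x') / Δx + (x * y') / Δy := by
            gcongr
    calc Δt / 4 * nrm _ ≤ Δt / 4 * (x * (x' / Δx) + y * (y' / Δx) + (x * x') / Δx + (x * y') / Δy) :=
          mul_le_mul_of_nonneg_left tri (by positivity)
    _ = cx * (2 * x * x' + y * y') + cy * (x * y') := by
          rw [hcx, hcy]; field_simp; ring
  -- second component
  have hcomp2 : nrm (Bm K J α Δx Δy Δt u u').2 ≤ cy * (2 * y * y' + x * x') + cx * (y * x') := by
    have e : (Bm K J α Δx Δy Δt u u').2 = fun p => (Δt / 4) *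
        ((fun p => u.1 p * Dy K J Δy (Qinv K J α Δx Δy u'.1) p +
          u.2 p * Dy K J Δy (Qinv K J α Δx Δy u'.2) p +
          Dx K J Δx (fun q => u.2 q * Qinv K J α Δx Δy u'.1 q) p +
          Dy K J Δy (fun q => u.2 q * Qinv K J α Δx Δy u'.2 q) p) p) := rfl
    rw [e, nrm_smul, abs_of_pos (by positivity)]
    have t1 : nrm (fun p => u.1 p * Dy K J Δy (Qinv K J α Δx Δy u'.1) p) ≤ x * (x' / Δy) :=
      (nrm_mul _ _).trans (mul_le_mul_of_nonneg_left hq3 hx0)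
    have t2 : nrm (fun p => u.2 p * Dy K J Δy (Qinv K J α Δx Δy u'.2) p) ≤ y * (y' / Δy) :=
      (nrm_mul _ _).trans (mul_le_mul_of_nonneg_left hq4 hy0)
    have t3 : nrm (Dx K J Δx (fun q => u.2 q * Qinv K J α Δx Δy u'.1 q)) ≤ (y * x') / Δx :=
      (nrm_Dx hx _).trans (by gcongr)
    have t4 : nrm (Dy K J Δy (fun q => u.2 q * Qinv K J α Δx Δy u'.2 q)) ≤ (y * y') / Δy :=
      (nrm_Dy hy _).trans (by gcongr)
    have tri : nrm (fun p => u.1 p * Dy K J Δy (Qinv K J α Δx Δy u'.1) p +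
          u.2 p * Dy K J Δy (Qinv K J α Δx Δy u'.2) p +
          Dx K J Δx (fun q => u.2 q * Qinv K J α Δx Δy u'.1 q) p +
          Dy K J Δy (fun q => u.2 q * Qinv K J α Δx Δy u'.2 q) p)
        ≤ x * (x' / Δy) + y * (y' / Δy) + (y * x') / Δx + (y * y') / Δy := by
      calc nrm _ ≤ nrm (fun p => u.1 p * Dy K J Δy (Qinv K J α Δx Δy u'.1) p +
            u.2 p * Dy K J Δy (Qinv K J α Δx Δy u'.2) p +
            Dx K J Δx (fun q => u.2 q * Qinv K J α Δx Δy u'.1 q) p)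
          + nrm (Dy K J Δy (fun q => u.2 q * Qinv K J α Δx Δy u'.2 q)) :=
            nrm_add_le'' _ _
      _ ≤ (nrm (fun p => u.1 p * Dy K J Δy (Qinv K J α Δx Δy u'.1) p +
            u.2 p * Dy K J Δy (Qinv K J α Δx Δy u'.2) p)
          + nrm (Dx K J Δx (fun q => u.2 q * Qinv K J α Δx Δy u'.1 q)))
          + nrm (Dy K J Δy (fun q => u.2 q * Qinv K J α Δx Δy u'.2 q)) := by
            gcongr ?_ + _
            exact nrm_add_le'' _ _
      _ ≤ ((nrm (fun p => u.1 p * Dy K J Δy (Qinv K J α Δx Δy u'.1) p)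
          + nrm (fun p => u.2 p * Dy K J Δy (Qinv K J α Δx Δy u'.2) p))
          + nrm (Dx K J Δx (fun q => u.2 q * Qinv K J α Δx Δy u'.1 q)))
          + nrm (Dy K J Δy (fun q => u.2 q * Qinv K J α Δx Δy u'.2 q)) := by
            gcongr (?_ + _) + _
            exact nrm_add_le'' _ _
      _ ≤ x * (x' / Δy) + y * (y' / Δy) + (y * x') / Δx + (y * y') / Δy := by
            gcongr
    calc Δt / 4 * nrm _ ≤ Δt / 4 * (x * (x' / Δy) + y * (y' / Δy) + (y * x') / Δx + (y * y') / Δy) :=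
          mul_le_mul_of_nonneg_left tri (by positivity)
    _ = cy * (2 * y * y' + x * x') + cx * (y * x') := by
          rw [hcx, hcy]; field_simp; ring
  -- combine
  have hA1 : nrm (Bm K J α Δx Δy Δt u u').1 ≤ x * (κ * U') + cx * (U * U') := by
    refine hcomp1.trans ?_
    have h1 : cx * x' + cy * y' ≤ κ * U' := by
      have hc := cauchy2 cx cy x' y'
      rw [← hκ] at hc
      have : Real.sqrt (x' ^ 2 + y' ^ 2) = U' := by rw [hU'2, Real.sqrt_sq hU'0]
      rw [this] at hc
      linarith
    have h2 : x * x' + y * y' ≤ U * U' := by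
      have hc := cauchy2 x y x' y'
      have e1 : Real.sqrt (x ^ 2 + y ^ 2) = U := by rw [hU2, Real.sqrt_sq hU0]
      have e2 : Real.sqrt (x' ^ 2 + y' ^ 2) = U' := by rw [hU'2, Real.sqrt_sq hU'0]
      rw [e1, e2] at hc
      linarith
    have e1 : x * (cx * x' + cy * y') ≤ x * (κ * U') := mul_le_mul_of_nonneg_left h1 hx0
    have e2 : cx * (x * x' + y * y') ≤ cx * (U * U') := mul_le_mul_of_nonneg_left h2 hcx0.le
    nlinarith [e1, e2]
  have hA2 : nrm (Bm K J α Δx Δy Δt u u').2 ≤ y * (κ * U') + cy * (U * U') := by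
    refine hcomp2.trans ?_
    have h1 : cx * x' + cy * y' ≤ κ * U' := by
      have hc := cauchy2 cx cy x' y'
      rw [← hκ] at hc
      have : Real.sqrt (x' ^ 2 + y' ^ 2) = U' := by rw [hU'2, Real.sqrt_sq hU'0]
      rw [this] at hc
      linarith
    have h2 : x * x' + y * y' ≤ U * U' := by
      have hc := cauchy2 x y x' y'
      have e1 : Real.sqrt (x ^ 2 + y ^ 2) = U := by rw [hU2, Real.sqrt_sq hU0]
      have e2 : Real.sqrt (x' ^ 2 + y' ^ 2) = U' := by rw [hU'2, Real.sqrt_sq hU'0]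
      rw [e1, e2] at hc
      linarith
    have e1 : y * (cx * x' + cy * y') ≤ y * (κ * U') := mul_le_mul_of_nonneg_left h1 hy0
    have e2 : cy * (x * x' + y * y') ≤ cy * (U * U') := mul_le_mul_of_nonneg_left h2 hcy0.le
    nlinarith [e1, e2]
  have hfin : pnrm (Bm K J α Δx Δy Δt u u')
      ≤ Real.sqrt ((x * (κ * U') + cx * (U * U')) ^ 2 + (y * (κ * U') + cy * (U * U')) ^ 2) :=
    pnrm_le_of hA1 hA2
  refine hfin.trans ?_
  have hcau : x * cx + y * cy ≤ U * κ := by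
    have hc := cauchy2 x y cx cy
    have e1 : Real.sqrt (x ^ 2 + y ^ 2) = U := by rw [hU2, Real.sqrt_sq hU0]
    rw [e1, ← hκ] at hc
    linarith
  have hkey : (x * (κ * U') + cx * (U * U')) ^ 2 + (y * (κ * U') + cy * (U * U')) ^ 2
      ≤ (2 * κ * U * U') ^ 2 := by
    have h9 : 0 ≤ (2 * κ * U' ^ 2) * (U * κ - (x * cx + y * cy)) :=
      mul_nonneg (by positivity) (sub_nonneg.mpr hcau)
    have i1 : (x ^ 2 + y ^ 2) * (κ ^ 2 * U' ^ 2) = U ^ 2 * (κ ^ 2 * U' ^ 2) := by rw [hU2]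
    have i2 : (cx ^ 2 + cy ^ 2) * (U ^ 2 * U' ^ 2) = κ ^ 2 * (U ^ 2 * U' ^ 2) := by rw [hκ2]
    nlinarith [i1, i2, mul_nonneg hU0 h9]
  calc Real.sqrt ((x * (κ * U') + cx * (U * U')) ^ 2 + (y * (κ * U') + cy * (U * U')) ^ 2)
      ≤ Real.sqrt ((2 * κ * U * U') ^ 2) := Real.sqrt_le_sqrt hkey
  _ = 2 * κ * U * U' := Real.sqrt_sq (by positivity)
  _ = 2 * Real.sqrt ((Δt / (4 * Δx)) ^ 2 + (Δt / (4 * Δy)) ^ 2) * U * U' := by rw [hκ]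



lemma pairNorm_eq {Δx Δy : ℝ} (h : 0 ≤ Δx * Δy)
    (v : (ZMod K × ZMod J → ℝ) × (ZMod K × ZMod J → ℝ)) :
    pairNorm K J Δx Δy v = Real.sqrt (Δx * Δy) * pnrm v := by
  unfold pairNorm pnrm
  rw [← Real.sqrt_mul h]
  congr 1
  unfold ssq
  rw [mul_add, Finset.mul_sum, Finset.mul_sum, ← Finset.sum_add_distrib]
  exact Finset.sum_congr rfl fun p _ => by ring

lemma pairNorm_nonneg (Δx Δy : ℝ)
    (v : (ZMod K × ZMod J → ℝ) × (ZMod K × ZMod J → ℝ)) :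
    0 ≤ pairNorm K J Δx Δy v := Real.sqrt_nonneg _

/-! ### transfer to Euclidean space -/

def toE (Δx Δy : ℝ) (v : (ZMod K × ZMod J → ℝ) × (ZMod K × ZMod J → ℝ)) :
    EuclideanSpace ℝ (Bool × (ZMod K × ZMod J)) :=
  (WithLp.equiv 2 (Bool × (ZMod K × ZMod J) → ℝ)).symm
    (fun bp => (if bp.1 then v.1 bp.2 else v.2 bp.2) * Real.sqrt (Δx * Δy))

def fromE (Δx Δy : ℝ) (g : EuclideanSpace ℝ (Bool × (ZMod K × ZMod J))) :
    (ZMod K × ZMod J → ℝ) × (ZMod K × ZMod J → ℝ) :=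
  (fun p => (WithLp.equiv 2 (Bool × (ZMod K × ZMod J) → ℝ)) g (true, p) / Real.sqrt (Δx * Δy),
   fun p => (WithLp.equiv 2 (Bool × (ZMod K × ZMod J) → ℝ)) g (false, p) / Real.sqrt (Δx * Δy))

lemma norm_toE {Δx Δy : ℝ} (h : 0 ≤ Δx * Δy)
    (v : (ZMod K × ZMod J → ℝ) × (ZMod K × ZMod J → ℝ)) :
    ‖toE (K := K) (J := J) Δx Δy v‖ = pairNorm K J Δx Δy v := by
  rw [EuclideanSpace.norm_eq, pairNorm_eq h, pnrm_eq]
  have eT : ∀ p : ZMod K × ZMod J,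
      ‖toE (K := K) (J := J) Δx Δy v (true, p)‖ ^ 2 = v.1 p ^ 2 * (Δx * Δy) := by
    intro p
    simp only [toE, WithLp.equiv_symm_apply, PiLp.toLp_apply, if_true, Real.norm_eq_abs, sq_abs,
      mul_pow, Real.sq_sqrt h]
  have eF : ∀ p : ZMod K × ZMod J,
      ‖toE (K := K) (J := J) Δx Δy v (false, p)‖ ^ 2 = v.2 p ^ 2 * (Δx * Δy) := by
    intro p
    simp only [toE, WithLp.equiv_symm_apply, PiLp.toLp_apply, Bool.false_eq_true, if_false,
      Real.norm_eq_abs, sq_abs, mul_pow, Real.sq_sqrt h]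
  have e3 : ∑ bp : Bool × (ZMod K × ZMod J), ‖toE (K := K) (J := J) Δx Δy v bp‖ ^ 2
      = (nrm v.1 ^ 2 + nrm v.2 ^ 2) * (Δx * Δy) := by
    rw [Fintype.sum_prod_type, Fintype.sum_bool]
    rw [Finset.sum_congr rfl fun p _ => eT p, Finset.sum_congr rfl fun p _ => eF p]
    rw [sq_nrm, sq_nrm]
    unfold ssq
    rw [add_mul, Finset.sum_mul, Finset.sum_mul]
  rw [e3, Real.sqrt_mul (by positivity) (Δx * Δy), mul_comm]

lemma toE_sub (Δx Δy : ℝ) (v w : (ZMod K × ZMod J → ℝ) × (ZMod K × ZMod J → ℝ)) :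
    toE (K := K) (J := J) Δx Δy (v - w)
      = toE (K := K) (J := J) Δx Δy v - toE (K := K) (J := J) Δx Δy w := by
  unfold toE
  simp only [WithLp.equiv_symm_apply]
  rw [← WithLp.toLp_sub]
  congr 1
  funext bp
  obtain ⟨b, p⟩ := bp
  cases b <;>
    simp [Prod.fst_sub, Prod.snd_sub, Pi.sub_apply, sub_mul]

lemma toE_fromE {Δx Δy : ℝ} (h : 0 < Δx * Δy)
    (g : EuclideanSpace ℝ (Bool × (ZMod K × ZMod J))) :
    toE (K := K) (J := J) Δx Δy (fromE Δx Δy g) = g := by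
  have hs : Real.sqrt (Δx * Δy) ≠ 0 := by
    have := Real.sqrt_pos.mpr h; positivity
  unfold toE fromE
  rw [show g = (WithLp.equiv 2 (Bool × (ZMod K × ZMod J) → ℝ)).symm
      ((WithLp.equiv 2 (Bool × (ZMod K × ZMod J) → ℝ)) g) from (Equiv.symm_apply_apply _ _).symm]
  congr 1
  · funext bp
    obtain ⟨b, p⟩ := bp
    cases b <;> simp <;> field_simp

lemma fromE_toE {Δx Δy : ℝ} (h : 0 < Δx * Δy)
    (v : (ZMod K × ZMod J → ℝ) × (ZMod K × ZMod J → ℝ)) :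
    fromE Δx Δy (toE (K := K) (J := J) Δx Δy v) = v := by
  have hs : Real.sqrt (Δx * Δy) ≠ 0 := by
    have := Real.sqrt_pos.mpr h; positivity
  unfold toE fromE
  apply Prod.ext_iff.mpr
  constructor <;> · funext p; simp; field_simp

lemma exists_unique_fixed {Δx Δy : ℝ} (hΔ : 0 < Δx * Δy) (r L : ℝ)
    (hr : 0 ≤ r) (hL0 : 0 ≤ L) (hL1 : L < 1)
    (F : (ZMod K × ZMod J → ℝ) × (ZMod K × ZMod J → ℝ) →
      (ZMod K × ZMod J → ℝ) × (ZMod K × ZMod J → ℝ))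
    (hself : ∀ v, pairNorm K J Δx Δy v ≤ r → pairNorm K J Δx Δy (F v) ≤ r)
    (hlip : ∀ v w, pairNorm K J Δx Δy v ≤ r → pairNorm K J Δx Δy w ≤ r →
      pairNorm K J Δx Δy (F v - F w) ≤ L * pairNorm K J Δx Δy (v - w)) :
    ∃! x, pairNorm K J Δx Δy x ≤ r ∧ F x = x := by
  haveI hne : Nonempty
      (Metric.closedBall (0 : EuclideanSpace ℝ (Bool × (ZMod K × ZMod J))) r) :=
    (Metric.nonempty_closedBall.mpr hr).to_subtype
  haveI : CompleteSpace
      (Metric.closedBall (0 : EuclideanSpace ℝ (Bool × (ZMod K × ZMod J))) r) :=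
    (Metric.isClosed_closedBall).completeSpace_coe
  have hmem : ∀ z : Metric.closedBall (0 : EuclideanSpace ℝ (Bool × (ZMod K × ZMod J))) r,
      pairNorm K J Δx Δy (fromE Δx Δy z.1) ≤ r := by
    intro z
    have h1 : pairNorm K J Δx Δy (fromE Δx Δy z.1)
        = ‖toE (K := K) (J := J) Δx Δy (fromE Δx Δy z.1)‖ := (norm_toE hΔ.le _).symm
    rw [h1, toE_fromE hΔ]
    exact mem_closedBall_zero_iff.mp z.2
  have hFmap : ∀ z : Metric.closedBall (0 : EuclideanSpace ℝ (Bool × (ZMod K × ZMod J))) r,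
      toE (K := K) (J := J) Δx Δy (F (fromE Δx Δy z.1)) ∈
        Metric.closedBall (0 : EuclideanSpace ℝ (Bool × (ZMod K × ZMod J))) r := by
    intro z
    rw [Metric.mem_closedBall, dist_zero_right, norm_toE hΔ.le]
    exact hself _ (hmem z)
  let g : Metric.closedBall (0 : EuclideanSpace ℝ (Bool × (ZMod K × ZMod J))) r →
      Metric.closedBall (0 : EuclideanSpace ℝ (Bool × (ZMod K × ZMod J))) r :=
    fun z => ⟨toE (K := K) (J := J) Δx Δy (F (fromE Δx Δy z.1)), hFmap z⟩
  have hcontr : ContractingWith ⟨L, hL0⟩ g := by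
    constructor
    · exact NNReal.coe_lt_coe.1 (show ((⟨L, hL0⟩ : NNReal) : ℝ) < ((1 : NNReal) : ℝ) by simpa using hL1)
    · apply LipschitzWith.of_dist_le_mul
      intro z1 z2
      rw [Subtype.dist_eq, dist_eq_norm, Subtype.dist_eq, dist_eq_norm]
      show ‖toE (K := K) (J := J) Δx Δy (F (fromE Δx Δy z1.1))
          - toE (K := K) (J := J) Δx Δy (F (fromE Δx Δy z2.1))‖ ≤ _
      rw [← toE_sub, norm_toE hΔ.le]
      have e2 : z1.1 - z2.1
          = toE (K := K) (J := J) Δx Δy (fromE Δx Δy z1.1 - fromE Δx Δy z2.1) := by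
        rw [toE_sub, toE_fromE hΔ, toE_fromE hΔ]
      rw [e2, norm_toE hΔ.le]
      exact hlip _ _ (hmem z1) (hmem z2)
  have hfix : g (ContractingWith.fixedPoint g hcontr) = ContractingWith.fixedPoint g hcontr :=
    ContractingWith.fixedPoint_isFixedPt hcontr
  set z0 := ContractingWith.fixedPoint g hcontr with hz0
  set x := fromE Δx Δy z0.1 with hxdef
  have hxball : pairNorm K J Δx Δy x ≤ r := hmem z0
  have hxfix : F x = x := by
    have h1 : toE (K := K) (J := J) Δx Δy (F x) = z0.1 := congrArg Subtype.val hfix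
    have h2 := congrArg (fromE Δx Δy) h1
    rwa [fromE_toE hΔ] at h2
  refine ⟨x, ⟨hxball, hxfix⟩, ?_⟩
  rintro y ⟨hyball, hyfix⟩
  have hd : pairNorm K J Δx Δy (y - x) ≤ L * pairNorm K J Δx Δy (y - x) := by
    have h3 := hlip y x hyball hxball
    rwa [hyfix, hxfix] at h3
  have h0 : pairNorm K J Δx Δy (y - x) = 0 := by
    have hn := pairNorm_nonneg (K := K) (J := J) Δx Δy (y - x)
    nlinarith
  have hpz : pnrm (y - x) = 0 := by
    rw [pairNorm_eq hΔ.le] at h0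
    have hs : (0:ℝ) < Real.sqrt (Δx * Δy) := Real.sqrt_pos.mpr hΔ
    rcases mul_eq_zero.mp h0 with h | h
    · exact absurd h hs.ne'
    · exact h
  have h4 : y - x = 0 := pnrm_eq_zero hpz
  exact sub_eq_zero.mp h4


end

/-- with ρ = √(2+√5), if C_x² + C_y² ≤ (√5 − 2)/(200 r_a²) where
    C_x = Δt/(4Δx√(ΔxΔy)), C_y = Δt/(4Δy√(ΔxΔy)) and r_a = ‖a‖, then Φ_a maps
    the closed ball Ω_a = {v : ‖v‖ ≤ ρ r_a} into itself and is a contraction on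
    it, hence Scheme 1 has a unique solution in Ω_a. -/
theorem scheme1_solvability (K J : ℕ) [NeZero K] [NeZero J]
    (α Δx Δy Δt : ℝ) (hα : 0 < α) (hx : 0 < Δx) (hy : 0 < Δy) (ht : 0 < Δt)
    (a : (ZMod K × ZMod J → ℝ) × (ZMod K × ZMod J → ℝ))
    (ra ρ Cx Cy : ℝ)
    (hra : ra = pairNorm K J Δx Δy a)
    (hρ : ρ = Real.sqrt (2 + Real.sqrt 5))
    (hCx : Cx = Δt / (4 * Δx * Real.sqrt (Δx * Δy)))
    (hCy : Cy = Δt / (4 * Δy * Real.sqrt (Δx * Δy)))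
    (hsmall : Cx ^ 2 + Cy ^ 2 ≤ (Real.sqrt 5 - 2) / (200 * ra ^ 2)) :
    (∀ v, pairNorm K J Δx Δy v ≤ ρ * ra →
        pairNorm K J Δx Δy (Phi K J α Δx Δy Δt a v) ≤ ρ * ra) ∧
    (∃ L : ℝ, 0 ≤ L ∧ L < 1 ∧
      ∀ v w, pairNorm K J Δx Δy v ≤ ρ * ra → pairNorm K J Δx Δy w ≤ ρ * ra →
        pairNorm K J Δx Δy (Phi K J α Δx Δy Δt a v - Phi K J α Δx Δy Δt a w) ≤
          L * pairNorm K J Δx Δy (v - w)) ∧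
    (∃! x, pairNorm K J Δx Δy x ≤ ρ * ra ∧ Phi K J α Δx Δy Δt a x = x) := by
  have hΔ : 0 < Δx * Δy := mul_pos hx hy
  have hh0 : 0 < Real.sqrt (Δx * Δy) := Real.sqrt_pos.mpr hΔ
  have hpn : ∀ v, pairNorm K J Δx Δy v = Real.sqrt (Δx * Δy) * pnrm v :=
    fun v => pairNorm_eq hΔ.le v
  -- weighted constant κw
  set κw := Real.sqrt (Cx ^ 2 + Cy ^ 2) with hκw
  have hκw0 : 0 ≤ κw := Real.sqrt_nonneg _
  have hκu : Real.sqrt ((Δt / (4 * Δx)) ^ 2 + (Δt / (4 * Δy)) ^ 2)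
      = Real.sqrt (Δx * Δy) * κw := by
    have hsq : Real.sqrt (Δx * Δy) ^ 2 = Δx * Δy := Real.sq_sqrt hΔ.le
    have hCxe : Real.sqrt (Δx * Δy) * Cx = Δt / (4 * Δx) := by
      rw [hCx]; field_simp
    have hCye : Real.sqrt (Δx * Δy) * Cy = Δt / (4 * Δy) := by
      rw [hCy]; field_simp
    have e1 : (Δt / (4 * Δx)) ^ 2 + (Δt / (4 * Δy)) ^ 2
        = (Δx * Δy) * (Cx ^ 2 + Cy ^ 2) := by
      rw [← hCxe, ← hCye, mul_pow, mul_pow, hsq]; ring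
    rw [e1, Real.sqrt_mul hΔ.le, hκw]
  -- pairNorm bound on Bm
  have hB : ∀ u u', pairNorm K J Δx Δy (Bm K J α Δx Δy Δt u u') ≤
      2 * κw * pairNorm K J Δx Δy u * pairNorm K J Δx Δy u' := by
    intro u u'
    rw [hpn, hpn, hpn]
    have hb := bm_bound α hx hy ht u u'
    rw [hκu] at hb
    calc Real.sqrt (Δx * Δy) * pnrm (Bm K J α Δx Δy Δt u u')
        ≤ Real.sqrt (Δx * Δy) * (2 * (Real.sqrt (Δx * Δy) * κw) * pnrm u * pnrm u') :=
          mul_le_mul_of_nonneg_left hb hh0.le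
    _ = 2 * κw * (Real.sqrt (Δx * Δy) * pnrm u) * (Real.sqrt (Δx * Δy) * pnrm u') := by
          have h2 : Real.sqrt (Δx * Δy) ^ 2 = Δx * Δy := Real.sq_sqrt hΔ.le
          ring
  -- ra facts
  have hra0 : 0 ≤ ra := hra ▸ pairNorm_nonneg Δx Δy a
  have hCx0 : 0 < Cx := by rw [hCx]; positivity
  have hrapos : 0 < ra := by
    rcases hra0.eq_or_lt with h | h
    · exfalso
      rw [← h] at hsmall
      norm_num at hsmall
      nlinarith [sq_nonneg Cy, hCx0]
    · exact h
  -- numerics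
  have hs5 : Real.sqrt 5 ^ 2 = 5 := Real.sq_sqrt (by norm_num)
  have hs50 : 0 ≤ Real.sqrt 5 := Real.sqrt_nonneg 5
  have hs5l : 2.236 ≤ Real.sqrt 5 := by nlinarith
  have hs5u : Real.sqrt 5 ≤ 2.2361 := by nlinarith
  have hρ0 : 0 ≤ ρ := hρ ▸ Real.sqrt_nonneg _
  have hρ2 : ρ ^ 2 = 2 + Real.sqrt 5 := hρ ▸ Real.sq_sqrt (by nlinarith)
  have hρl : 2.05 ≤ ρ := by nlinarith
  have hρu : ρ ≤ 2.06 := by nlinarith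
  -- ε := κw * ra
  set ε := κw * ra with hε
  have hε0 : 0 ≤ ε := mul_nonneg hκw0 hra0
  have hε2 : ε ^ 2 ≤ (Real.sqrt 5 - 2) / 200 := by
    have h1 : (Cx ^ 2 + Cy ^ 2) * ra ^ 2 ≤ (Real.sqrt 5 - 2) / 200 := by
      have h2 := mul_le_mul_of_nonneg_right hsmall (sq_nonneg ra)
      have h3 : (Real.sqrt 5 - 2) / (200 * ra ^ 2) * ra ^ 2 = (Real.sqrt 5 - 2) / 200 := by
        field_simp
      linarith [h3 ▸ h2]
    have h4 : ε ^ 2 = (Cx ^ 2 + Cy ^ 2) * ra ^ 2 := by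
      rw [hε, mul_pow, hκw, Real.sq_sqrt (by positivity)]
    linarith
  have hεu : ε ≤ 0.0344 := by nlinarith
  -- triangle inequalities for pairNorm
  have ptri_add : ∀ X Y, pairNorm K J Δx Δy (X + Y) ≤
      pairNorm K J Δx Δy X + pairNorm K J Δx Δy Y := by
    intro X Y
    rw [hpn, hpn, hpn, ← mul_add]
    exact mul_le_mul_of_nonneg_left (pnrm_add_le X Y) hh0.le
  have ptri_sub : ∀ X Y, pairNorm K J Δx Δy (X - Y) ≤
      pairNorm K J Δx Δy X + pairNorm K J Δx Δy Y := by
    intro X Y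
    rw [hpn, hpn, hpn, ← mul_add]
    exact mul_le_mul_of_nonneg_left (pnrm_sub_le X Y) hh0.le
  have pneg : ∀ X, pairNorm K J Δx Δy (-X) = pairNorm K J Δx Δy X := by
    intro X; rw [hpn, hpn, pnrm_neg]
  -- Part 1: self-mapping
  have part1 : ∀ v, pairNorm K J Δx Δy v ≤ ρ * ra →
      pairNorm K J Δx Δy (Phi K J α Δx Δy Δt a v) ≤ ρ * ra := by
    intro v hv
    rw [phi_eq]
    have hav : pairNorm K J Δx Δy (a + v) ≤ (1 + ρ) * ra := by
      have h1 := ptri_add a v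
      rw [← hra] at h1
      nlinarith
    have hav0 := pairNorm_nonneg (K := K) (J := J) Δx Δy (a + v)
    have hbb := hB (a + v) (a + v)
    have hsq2 : pairNorm K J Δx Δy (a + v) * pairNorm K J Δx Δy (a + v)
        ≤ ((1 + ρ) * ra) * ((1 + ρ) * ra) := mul_self_le_mul_self hav0 hav
    have hbb2 : pairNorm K J Δx Δy (Bm K J α Δx Δy Δt (a + v) (a + v))
        ≤ 2 * κw * ((1 + ρ) * ra) * ((1 + ρ) * ra) := by
      have c1 : 0 ≤ 2 * κw := by linarith
      nlinarith [mul_le_mul_of_nonneg_left hsq2 c1]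
    have key : 1 + 2 * ε * (1 + ρ) ^ 2 ≤ ρ := by nlinarith
    calc pairNorm K J Δx Δy (a - Bm K J α Δx Δy Δt (a + v) (a + v))
        ≤ pairNorm K J Δx Δy a +
          pairNorm K J Δx Δy (Bm K J α Δx Δy Δt (a + v) (a + v)) := ptri_sub _ _
    _ ≤ ra + 2 * κw * ((1 + ρ) * ra) * ((1 + ρ) * ra) := by rw [← hra]; linarith
    _ = ra + 2 * ε * (1 + ρ) ^ 2 * ra := by rw [hε]; ring
    _ = (1 + 2 * ε * (1 + ρ) ^ 2) * ra := by ring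
    _ ≤ ρ * ra := mul_le_mul_of_nonneg_right key hra0
  -- Part 2: contraction
  set L := 4 * ε * (1 + ρ) with hL
  have hL0 : 0 ≤ L := by rw [hL]; positivity
  have hL1 : L < 1 := by rw [hL]; nlinarith
  have part2 : ∀ v w, pairNorm K J Δx Δy v ≤ ρ * ra → pairNorm K J Δx Δy w ≤ ρ * ra →
      pairNorm K J Δx Δy (Phi K J α Δx Δy Δt a v - Phi K J α Δx Δy Δt a w) ≤
        L * pairNorm K J Δx Δy (v - w) := by
    intro v w hv hw
    rw [phi_sub, pneg]
    have hvw0 := pairNorm_nonneg (K := K) (J := J) Δx Δy (v - w)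
    have hav : pairNorm K J Δx Δy (a + v) ≤ (1 + ρ) * ra := by
      have h1 := ptri_add a v
      rw [← hra] at h1
      nlinarith
    have haw : pairNorm K J Δx Δy (a + w) ≤ (1 + ρ) * ra := by
      have h1 := ptri_add a w
      rw [← hra] at h1
      nlinarith
    have hav0 := pairNorm_nonneg (K := K) (J := J) Δx Δy (a + v)
    have haw0 := pairNorm_nonneg (K := K) (J := J) Δx Δy (a + w)
    have hb1 := hB (v - w) (a + v)
    have hb2 := hB (a + w) (v - w)
    have c1 : 0 ≤ 2 * κw * pairNorm K J Δx Δy (v - w) :=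
      mul_nonneg (by linarith) hvw0
    have hb1' : pairNorm K J Δx Δy (Bm K J α Δx Δy Δt (v - w) (a + v))
        ≤ 2 * κw * pairNorm K J Δx Δy (v - w) * ((1 + ρ) * ra) := by
      have step : 2 * κw * pairNorm K J Δx Δy (v - w) * pairNorm K J Δx Δy (a + v)
          ≤ 2 * κw * pairNorm K J Δx Δy (v - w) * ((1 + ρ) * ra) :=
        mul_le_mul_of_nonneg_left hav c1
      linarith [hb1]
    have hb2' : pairNorm K J Δx Δy (Bm K J α Δx Δy Δt (a + w) (v - w))
        ≤ 2 * κw * ((1 + ρ) * ra) * pairNorm K J Δx Δy (v - w) := by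
      have s1 : 2 * κw * pairNorm K J Δx Δy (a + w) ≤ 2 * κw * ((1 + ρ) * ra) :=
        mul_le_mul_of_nonneg_left haw (by linarith)
      have step : 2 * κw * pairNorm K J Δx Δy (a + w) * pairNorm K J Δx Δy (v - w)
          ≤ 2 * κw * ((1 + ρ) * ra) * pairNorm K J Δx Δy (v - w) :=
        mul_le_mul_of_nonneg_right s1 hvw0
      linarith [hb2]
    calc pairNorm K J Δx Δy (Bm K J α Δx Δy Δt (v - w) (a + v) +
          Bm K J α Δx Δy Δt (a + w) (v - w))
        ≤ pairNorm K J Δx Δy (Bm K J α Δx Δy Δt (v - w) (a + v)) +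
          pairNorm K J Δx Δy (Bm K J α Δx Δy Δt (a + w) (v - w)) := ptri_add _ _
    _ ≤ 2 * κw * pairNorm K J Δx Δy (v - w) * ((1 + ρ) * ra)
        + 2 * κw * ((1 + ρ) * ra) * pairNorm K J Δx Δy (v - w) := by linarith
    _ = L * pairNorm K J Δx Δy (v - w) := by rw [hL, hε]; ring
  refine ⟨part1, ⟨L, hL0, hL1, part2⟩, ?_⟩
  exact exists_unique_fixed hΔ (ρ * ra) L (by positivity) hL0 hL1 _ part1 part2
end
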